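/- Let R be a GCD domain, g(t) ∈ R[t] monic of degree n, f(t) ∈ R[t], and let h(t) be the unique polynomial of degree less than n with f(t) ≡ h(t) mod g(t). Then the gcd of all entries of the matrix f(C_g) equals (up to units of R) the content of h(t). -/

import Mathlib

open Polynomial Matrix

def companion {R : Type*} [CommRing R] (g : R[X]) :
    Matrix (Fin g.natDegree) (Fin g.natDegree) R :=
  Matrix.of fun i j =>
    if (i : ℕ) = 0 then -g.coeff (g.natDegree - 1 - (j : ℕ))
    else if (i : ℕ) = (j : ℕ) + 1 then 1 else 0

section Aux
variable {R : Type*} [CommRing R] [IsDomain R]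

/-- row vector of reversed coefficients of `p %ₘ g` -/
noncomputable def wrow (g p : R[X]) : Fin g.natDegree → R :=
  fun j => (p %ₘ g).coeff (g.natDegree - 1 - (j : ℕ))

lemma mulX_mod {g : R[X]} (hg : g.Monic) (hn : 0 < g.natDegree) {r : R[X]}
    (hr : r.degree < g.degree) :
    (X * r) %ₘ g = X * r - C (r.coeff (g.natDegree - 1)) * g := by
  set n := g.natDegree with hndef
  have hdegg : g.degree = (n : WithBot ℕ) := degree_eq_natDegree hg.ne_zero
  have hdeg : (X * r - C (r.coeff (n - 1)) * g).degree < g.degree := by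
    rw [hdegg, degree_lt_iff_coeff_zero]
    intro m hm
    have hm' : (n : ℕ) ≤ m := by exact_mod_cast hm
    have h1 : (X * r).coeff m = r.coeff (m - 1) := by
      conv_lhs => rw [show m = (m - 1) + 1 by omega, coeff_X_mul]
    rw [coeff_sub, h1, coeff_C_mul]
    rcases eq_or_lt_of_le hm' with h | h
    · rw [← h, hg.coeff_natDegree, mul_one]
      simp [sub_self]
    · have h2 : r.coeff (m - 1) = 0 := by
        apply coeff_eq_zero_of_degree_lt
        apply hr.trans_le
        rw [hdegg]
        exact_mod_cast Nat.cast_le.mpr (show n ≤ m - 1 by omega)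
      have h3 : g.coeff m = 0 := coeff_eq_zero_of_natDegree_lt h
      rw [h2, h3, mul_zero, sub_zero]
  have h0 : (C (r.coeff (n - 1)) * g) %ₘ g = 0 :=
    (modByMonic_eq_zero_iff_dvd hg).mpr ⟨C (r.coeff (n - 1)), mul_comm _ _⟩
  calc (X * r) %ₘ g
      = (X * r - C (r.coeff (n - 1)) * g + C (r.coeff (n - 1)) * g) %ₘ g := by
        rw [sub_add_cancel]
    _ = (X * r - C (r.coeff (n - 1)) * g) %ₘ g + (C (r.coeff (n - 1)) * g) %ₘ g :=
        add_modByMonic _ _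
    _ = X * r - C (r.coeff (n - 1)) * g := by
        rw [h0, add_zero, (modByMonic_eq_self_iff hg).mpr hdeg]

lemma wrow_mulX {g : R[X]} (hg : g.Monic) (hn : 0 < g.natDegree) (p : R[X]) :
    wrow g p ᵥ* companion g = wrow g (X * p) := by
  set n := g.natDegree with hndef
  set r := p %ₘ g with hrdef
  have hr : r.degree < g.degree := degree_modByMonic_lt p hg
  have hXp : (X * p) %ₘ g = X * r - C (r.coeff (n - 1)) * g := by
    have h1 : (X * p) %ₘ g = (X * r) %ₘ g := by
      conv_lhs => rw [← modByMonic_add_div p g]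
      rw [mul_add, ← mul_assoc, mul_comm X g, mul_assoc, add_modByMonic, self_mul_modByMonic hg, add_zero]
    rw [h1, mulX_mod hg hn hr]
  funext j
  have hsum : (wrow g p ᵥ* companion g) j =
      ∑ i : Fin n, wrow g p i *
        (if (i : ℕ) = 0 then -g.coeff (n - 1 - (j : ℕ))
         else if (i : ℕ) = (j : ℕ) + 1 then 1 else 0) := by
    simp [vecMul, dotProduct, companion]
    rfl
  rw [hsum]
  have hsplit : ∀ i : Fin n, wrow g p i *
      (if (i : ℕ) = 0 then -g.coeff (n - 1 - (j : ℕ))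
       else if (i : ℕ) = (j : ℕ) + 1 then 1 else 0)
      = (if i = (⟨0, hn⟩ : Fin n) then -(r.coeff (n - 1) * g.coeff (n - 1 - (j : ℕ))) else 0)
        + (if (i : ℕ) = (j : ℕ) + 1 then wrow g p i else 0) := by
    intro i
    rcases eq_or_ne (i : ℕ) 0 with h0 | h0
    · have hi : i = (⟨0, hn⟩ : Fin n) := Fin.ext h0
      simp [h0, hi, wrow, ← hrdef, mul_comm]
      exact Or.inl rfl
    · have hi : i ≠ (⟨0, hn⟩ : Fin n) := fun h => h0 (by rw [h])
      simp only [if_neg h0, if_neg hi, zero_add]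
      split <;> simp
  rw [Finset.sum_congr rfl fun i _ => hsplit i, Finset.sum_add_distrib,
    Finset.sum_ite_eq' Finset.univ (⟨0, hn⟩ : Fin n), if_pos (Finset.mem_univ _)]
  have hw : ∀ i : Fin n, wrow g p i = r.coeff (n - 1 - (i : ℕ)) := fun i => rfl
  show _ + _ = ((X * p) %ₘ g).coeff (n - 1 - (j : ℕ))
  rw [hXp, coeff_sub, coeff_C_mul]
  rcases lt_or_eq_of_le (Nat.succ_le_of_lt j.isLt) with hj | hj
  · -- j + 1 < n
    have hsum2 : (∑ i : Fin n, if (i : ℕ) = (j : ℕ) + 1 then wrow g p i else 0)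
        = wrow g p ⟨(j : ℕ) + 1, hj⟩ := by
      rw [show (∑ i : Fin n, if (i : ℕ) = (j : ℕ) + 1 then wrow g p i else 0)
          = ∑ i : Fin n, if i = (⟨(j : ℕ) + 1, hj⟩ : Fin n) then wrow g p i else 0 from
        Finset.sum_congr rfl fun i _ => by
          congr 1
          simp [Fin.ext_iff]]
      simp
    rw [hsum2, hw]
    have hXr : (X * r).coeff (n - 1 - (j : ℕ)) = r.coeff (n - 1 - ((j : ℕ) + 1)) := by
      conv_lhs => rw [show n - 1 - (j : ℕ) = (n - 1 - ((j : ℕ) + 1)) + 1 by omega, coeff_X_mul]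
    rw [hXr]
    ring
  · -- j + 1 = n
    have hsum2 : (∑ i : Fin n, if (i : ℕ) = (j : ℕ) + 1 then wrow g p i else 0) = 0 := by
      apply Finset.sum_eq_zero
      intro i _
      rw [if_neg]
      omega
    have hXr : (X * r).coeff (n - 1 - (j : ℕ)) = 0 := by
      rw [show n - 1 - (j : ℕ) = 0 by omega, mul_coeff_zero, coeff_X_zero, zero_mul]
    rw [hsum2, hXr]
    ring

lemma wrow_eq_vecMul {g : R[X]} (hg : g.Monic) (hn : 0 < g.natDegree) (p : R[X]) :
    wrow g p = wrow g 1 ᵥ* aeval (companion g) p := by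
  induction p using Polynomial.induction_on with
  | C a =>
      funext j
      have h1 : C a = a • (1 : R[X]) := by simp [smul_eq_C_mul]
      have h2 : wrow g (C a) j = a * wrow g 1 j := by
        simp [wrow, h1, smul_modByMonic]
      rw [h2, aeval_C, Matrix.algebraMap_eq_diagonal, Matrix.vecMul_diagonal]
      simp [mul_comm]
  | add p q hp hq =>
      funext j
      have : wrow g (p + q) = wrow g p + wrow g q := by
        funext j'
        simp [wrow, add_modByMonic]
      rw [this, map_add, Matrix.vecMul_add, hp, hq]
  | monomial k a ih =>
      have h1 : C a * X ^ (k + 1) = X * (C a * X ^ k) := by ring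
      rw [h1, ← wrow_mulX hg hn, ih, Matrix.vecMul_vecMul, mul_comm X (C a * X ^ k)]
      simp [_root_.map_mul, mul_assoc]

lemma wrow_X_pow {g : R[X]} (hg : g.Monic) (hn : 0 < g.natDegree) (i : Fin g.natDegree) :
    wrow g (X ^ (g.natDegree - 1 - (i : ℕ))) = Pi.single i 1 := by
  have hi := i.isLt
  have hmod : (X ^ (g.natDegree - 1 - (i : ℕ)) : R[X]) %ₘ g
      = X ^ (g.natDegree - 1 - (i : ℕ)) := by
    rw [modByMonic_eq_self_iff hg, degree_X_pow, degree_eq_natDegree hg.ne_zero]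
    exact_mod_cast (show g.natDegree - 1 - (i : ℕ) < g.natDegree by omega)
  funext j
  have hj := j.isLt
  show (X ^ (g.natDegree - 1 - (i : ℕ)) %ₘ g).coeff (g.natDegree - 1 - (j : ℕ)) = _
  rw [hmod, coeff_X_pow, Pi.single_apply]
  congr 1
  rw [Fin.ext_iff]
  simp only [eq_iff_iff]
  omega

lemma wrow_one_eq {g : R[X]} (hg : g.Monic) (hn : 0 < g.natDegree) :
    wrow (R := R) g 1 = Pi.single (⟨g.natDegree - 1, by omega⟩ : Fin g.natDegree) 1 := by
  have := wrow_X_pow hg hn (⟨g.natDegree - 1, by omega⟩ : Fin g.natDegree)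
  simpa [show g.natDegree - 1 - (g.natDegree - 1) = 0 by omega] using this

lemma aeval_companion_row {g : R[X]} (hg : g.Monic) (hn : 0 < g.natDegree) (p : R[X])
    (i : Fin g.natDegree) :
    aeval (companion g) p i = wrow g (X ^ (g.natDegree - 1 - (i : ℕ)) * p) := by
  have h1 : (aeval (companion g) p) i = Pi.single i 1 ᵥ* aeval (companion g) p :=
    (Matrix.single_one_vecMul i _).symm
  rw [h1, ← wrow_X_pow hg hn i, wrow_eq_vecMul hg hn, Matrix.vecMul_vecMul, ← _root_.map_mul,
    ← wrow_eq_vecMul hg hn]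

lemma aeval_companion_self {g : R[X]} (hg : g.Monic) (hn : 0 < g.natDegree) :
    aeval (companion g) g = 0 := by
  funext i j
  have := aeval_companion_row hg hn g i
  have h0 : (X ^ (g.natDegree - 1 - (i : ℕ)) * g) %ₘ g = 0 :=
    mul_self_modByMonic hg
  have : aeval (companion g) g i j = wrow g (X ^ (g.natDegree - 1 - (i : ℕ)) * g) j := by
    rw [this]
  rw [this, wrow, h0]
  simp

lemma aeval_companion_last {g : R[X]} (hg : g.Monic) (hn : 0 < g.natDegree) (p : R[X])
    (j : Fin g.natDegree) :
    aeval (companion g) p ⟨g.natDegree - 1, by omega⟩ j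
      = (p %ₘ g).coeff (g.natDegree - 1 - (j : ℕ)) := by
  have := aeval_companion_row hg hn p (⟨g.natDegree - 1, by omega⟩ : Fin g.natDegree)
  have h2 : (X : R[X]) ^ (g.natDegree - 1 - (g.natDegree - 1)) * p = p := by
    rw [show g.natDegree - 1 - (g.natDegree - 1) = 0 by omega, pow_zero, one_mul]
  rw [show (aeval (companion g) p ⟨g.natDegree - 1, by omega⟩ j : R)
      = (aeval (companion g) p ⟨g.natDegree - 1, by omega⟩ : Fin g.natDegree → R) j from rfl,
    this, h2]
  rfl

variable [NormalizedGCDMonoid R]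

theorem stmt11_aux
    (g f : R[X]) (hg : g.Monic) :
    ∀ d : R,
      (∀ i j : Fin g.natDegree, d ∣ Polynomial.aeval (companion g) f i j) ↔
        d ∣ (f %ₘ g).content := by
  intro d
  rcases Nat.eq_zero_or_pos g.natDegree with hn | hn
  · -- g = 1
    have hg1 : g = 1 := hg.natDegree_eq_zero.mp hn
    subst hg1
    rw [modByMonic_one]
    simp only [content_zero, dvd_zero, iff_true]
    intro i
    exact absurd i.isLt (by omega)
  · constructor
    · intro hd
      apply Finset.dvd_gcd
      intro m hm
      have hdeg : (f %ₘ g).natDegree < g.natDegree := by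
        have h1 : (f %ₘ g).degree < g.degree := degree_modByMonic_lt f hg
        rcases eq_or_ne (f %ₘ g) 0 with h0 | h0
        · simp [h0, hn]
        · exact natDegree_lt_natDegree h0 h1
      have hmlt : m < g.natDegree :=
        lt_of_le_of_lt (le_natDegree_of_mem_supp m hm) hdeg
      have := hd ⟨g.natDegree - 1, by omega⟩ ⟨g.natDegree - 1 - m, by omega⟩
      rwa [aeval_companion_last hg hn,
        show g.natDegree - 1 - (g.natDegree - 1 - m) = m by omega] at this
    · intro hd i j
      have hf : aeval (companion g) f
          = aeval (companion g) (f %ₘ g) := by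
        conv_lhs => rw [← modByMonic_add_div f g]
        rw [map_add, _root_.map_mul, aeval_companion_self hg hn, zero_mul, add_zero]
      rw [hf, aeval_eq_sum_range]
      rw [show ((∑ k ∈ Finset.range ((f %ₘ g).natDegree + 1),
          (f %ₘ g).coeff k • companion g ^ k) i j)
        = ∑ k ∈ Finset.range ((f %ₘ g).natDegree + 1),
          (f %ₘ g).coeff k * (companion g ^ k) i j from by
        rw [Matrix.sum_apply]
        exact Finset.sum_congr rfl fun k _ => rfl]
      apply Finset.dvd_sum
      intro k _
      exact (hd.trans (content_dvd_coeff k)).mul_right _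


end Aux

/-- Over a GCD domain, the gcd of the entries of `f(C_g)` (the first determinantal
divisor) is, up to units, the content of the remainder `h = f mod g` of `f` modulo the
monic polynomial `g`: an element `d` divides all entries of `f(C_g)` iff it divides
the content of `h`. -/
theorem stmt11 {R : Type*} [CommRing R] [IsDomain R] [NormalizedGCDMonoid R]
    (g f : R[X]) (hg : g.Monic) :
    ∀ d : R,
      (∀ i j : Fin g.natDegree, d ∣ Polynomial.aeval (companion g) f i j) ↔
        d ∣ (f %ₘ g).content :=
  stmt11_aux g f hg
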